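/- arXiv:2301.03993 — 5 statements merged into one kernel-verified Lean document; each statement's English description precedes it below -/
import Mathlib

section
/- For every real number p ≥ 2 and all real numbers A, B, one has |A - B|^p ≤ 3·2^(p-1) · (J_p(A) - J_p(B))·(A - B), where J_p(t) := |t|^(p-2)·t. -/
/-- `J_p(t) = |t|^(p-2) t`. -/
noncomputable def Jp (p t : ℝ) : ℝ := |t| ^ (p - 2) * t

lemma Jp_neg (p t : ℝ) : Jp p (-t) = - Jp p t := by
  unfold Jp; rw [abs_neg]; ring

lemma Jp_nonneg_eq (p : ℝ) (hp : 2 ≤ p) {t : ℝ} (ht : 0 ≤ t) :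
    Jp p t = t ^ (p - 1) := by
  unfold Jp
  rw [abs_of_nonneg ht]
  rcases eq_or_lt_of_le ht with h | h
  · rw [← h, mul_zero, Real.zero_rpow (by linarith)]
  · rw [← Real.rpow_add_one (ne_of_gt h)]; ring_nf

-- (x - y)^q ≤ 2^q (x^q - y^q) for q ≥ 1, 0 ≤ y ≤ x
lemma lem1 {q x y : ℝ} (hq : 1 ≤ q) (hy : 0 ≤ y) (hxy : y ≤ x) :
    (x - y) ^ q ≤ 2 ^ q * (x ^ q - y ^ q) := by
  have hx : 0 ≤ x := le_trans hy hxy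
  have h2q : (2:ℝ) ≤ 2 ^ q := by
    calc (2:ℝ) = 2 ^ (1:ℝ) := (Real.rpow_one 2).symm
    _ ≤ 2 ^ q := Real.rpow_le_rpow_of_exponent_le one_le_two hq
  rcases le_or_gt y (x / 2) with h | h
  · -- y small
    have h1 : (x - y) ^ q ≤ x ^ q :=
      Real.rpow_le_rpow (by linarith) (by linarith) (by linarith)
    have h2 : y ^ q ≤ (x / 2) ^ q := Real.rpow_le_rpow hy h (by linarith)
    have h3 : (x / 2) ^ q = x ^ q / 2 ^ q := Real.div_rpow hx (by norm_num : (0:ℝ) ≤ 2) q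
    have h4 : x ^ q / 2 ^ q ≤ x ^ q / 2 := by
      apply div_le_div_of_nonneg_left ?_ (by norm_num) h2q
      exact Real.rpow_nonneg hx q
    -- so y^q ≤ x^q / 2, thus x^q - y^q ≥ x^q/2
    have h5 : y ^ q ≤ x ^ q / 2 := by linarith
    nlinarith [Real.rpow_nonneg hx q, Real.rpow_nonneg (show (0:ℝ) ≤ x - y by linarith) q]
  · -- y ≥ x/2, so x - y ≤ y
    rcases eq_or_lt_of_le hxy with he | hlt
    · subst he
      rw [sub_self, Real.zero_rpow (by linarith)]
      nlinarith [Real.rpow_nonneg hy q]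
    have hxy0 : (0:ℝ) < x - y := by linarith
    have hq1 : 0 ≤ q - 1 := by linarith
    have key : (x - y) ^ q ≤ x ^ q - y ^ q := by
      have e1 : x ^ q = x ^ (q - 1) * x := by
        rw [← Real.rpow_add_one (ne_of_gt (show (0:ℝ) < x by linarith))]; ring_nf
      have e2 : y ^ q = y ^ (q - 1) * y := by
        rcases eq_or_lt_of_le hy with h0 | h0
        · rw [← h0, Real.zero_rpow (by linarith), mul_zero]
        · rw [← Real.rpow_add_one (ne_of_gt h0)]; ring_nf
      have e3 : (x - y) ^ q = (x - y) ^ (q - 1) * (x - y) := by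
        rw [← Real.rpow_add_one (ne_of_gt hxy0)]; ring_nf
      have m1 : x ^ (q-1) ≥ y ^ (q-1) := Real.rpow_le_rpow hy hxy hq1
      have m2 : y ^ (q-1) ≥ (x - y) ^ (q-1) :=
        Real.rpow_le_rpow (le_of_lt hxy0) (by linarith) hq1
      rw [e1, e2, e3]
      nlinarith [Real.rpow_nonneg (le_of_lt hxy0) (q-1)]
    nlinarith [Real.rpow_nonneg hx q, Real.rpow_nonneg hy q,
      Real.rpow_nonneg (le_of_lt hxy0) q]

-- (x + y)^q ≤ 2^q (x^q + y^q) for q ≥ 1, x, y ≥ 0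
lemma lem2 {q x y : ℝ} (hq : 1 ≤ q) (hx : 0 ≤ x) (hy : 0 ≤ y) :
    (x + y) ^ q ≤ 2 ^ q * (x ^ q + y ^ q) := by
  rcases le_total x y with h | h
  · have h1 : (x + y) ^ q ≤ (2 * y) ^ q :=
      Real.rpow_le_rpow (by linarith) (by linarith) (by linarith)
    have h2 : (2 * y) ^ q = 2 ^ q * y ^ q := Real.mul_rpow (by norm_num) hy
    nlinarith [mul_nonneg (Real.rpow_nonneg (show (0:ℝ) ≤ 2 by norm_num) q) (Real.rpow_nonneg hx q)]
  · have h1 : (x + y) ^ q ≤ (2 * x) ^ q :=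
      Real.rpow_le_rpow (by linarith) (by linarith) (by linarith)
    have h2 : (2 * x) ^ q = 2 ^ q * x ^ q := Real.mul_rpow (by norm_num) hx
    nlinarith [mul_nonneg (Real.rpow_nonneg (show (0:ℝ) ≤ 2 by norm_num) q) (Real.rpow_nonneg hy q)]

lemma main_half (p : ℝ) (hp : 2 ≤ p) (A B : ℝ) (hAB : B ≤ A) (hA : 0 ≤ A) :
    |A - B| ^ p ≤ 3 * (2 : ℝ) ^ (p - 1) * ((Jp p A - Jp p B) * (A - B)) := by
  have hq : (1:ℝ) ≤ p - 1 := by linarith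
  have habs : |A - B| = A - B := abs_of_nonneg (by linarith)
  rw [habs]
  have h2p : (0:ℝ) < 2 ^ (p - 1) := Real.rpow_pos_of_pos (by norm_num) _
  rcases eq_or_lt_of_le hAB with he | hlt
  · subst he
    rw [sub_self, Real.zero_rpow (by linarith)]
    simp
  have hABpos : (0:ℝ) < A - B := by linarith
  have esplit : (A - B) ^ p = (A - B) ^ (p - 1) * (A - B) := by
    rw [← Real.rpow_add_one (ne_of_gt hABpos)]; ring_nf
  rw [esplit]
  rcases le_or_gt 0 B with hB | hB
  · rw [Jp_nonneg_eq p hp hA, Jp_nonneg_eq p hp hB]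
    have h1 : (A - B) ^ (p-1) ≤ 2 ^ (p-1) * (A ^ (p-1) - B ^ (p-1)) := lem1 hq hB hAB
    nlinarith [Real.rpow_nonneg (le_of_lt hABpos) (p-1)]
  · rw [Jp_nonneg_eq p hp hA]
    have hB' : Jp p B = - (-B) ^ (p - 1) := by
      rw [show B = -(-B) by ring, Jp_neg, Jp_nonneg_eq p hp (by linarith : (0:ℝ) ≤ -B)]
      ring_nf
    rw [hB']
    have h1 : (A + (-B)) ^ (p-1) ≤ 2 ^ (p-1) * (A ^ (p-1) + (-B) ^ (p-1)) :=
      lem2 hq hA (by linarith)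
    have e : A - B = A + (-B) := by ring
    rw [e] at hABpos ⊢
    nlinarith [Real.rpow_nonneg (le_of_lt hABpos) (p-1)]

theorem pointwise_monotonicity (p : ℝ) (hp : 2 ≤ p) (A B : ℝ) :
    |A - B| ^ p ≤ 3 * (2 : ℝ) ^ (p - 1) * ((Jp p A - Jp p B) * (A - B)) := by
  rcases le_total B A with h | h
  · rcases le_or_gt 0 A with hA | hA
    · exact main_half p hp A B h hA
    · have := main_half p hp (-B) (-A) (by linarith) (by linarith)
      rw [Jp_neg, Jp_neg] at this
      have e1 : |(-B) - (-A)| = |A - B| := by rw [show (-B) - (-A) = A - B by ring]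
      rw [e1] at this
      calc |A - B| ^ p ≤ 3 * (2:ℝ) ^ (p-1) * ((-Jp p B - -Jp p A) * (-B - -A)) := this
      _ = 3 * (2:ℝ) ^ (p-1) * ((Jp p A - Jp p B) * (A - B)) := by ring
  · rcases le_or_gt 0 B with hB | hB
    · have := main_half p hp B A h hB
      rw [abs_sub_comm] at this
      calc |A - B| ^ p ≤ 3 * (2:ℝ) ^ (p-1) * ((Jp p B - Jp p A) * (B - A)) := this
      _ = 3 * (2:ℝ) ^ (p-1) * ((Jp p A - Jp p B) * (A - B)) := by ring
    · have := main_half p hp (-A) (-B) (by linarith) (by linarith)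
      rw [Jp_neg, Jp_neg] at this
      have e1 : |(-A) - (-B)| = |A - B| := by rw [show (-A) - (-B) = B - A by ring, abs_sub_comm]
      rw [e1] at this
      calc |A - B| ^ p ≤ 3 * (2:ℝ) ^ (p-1) * ((-Jp p A - -Jp p B) * (-A - -B)) := this
      _ = 3 * (2:ℝ) ^ (p-1) * ((Jp p A - Jp p B) * (A - B)) := by ring
end

section
/- Let 1 < p < ∞ and let g : ℝ → ℝ be an increasing differentiable function. Define G(t) = ∫₀ᵗ (g'(τ))^(1/p) dτ. Then for all a, b ∈ ℝ, J_p(a - b)·(g(a) - g(b)) ≥ |G(a) - G(b)|^p, where J_p(t) = |t|^(p-2) t. -/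
open MeasureTheory Set Filter Topology ENNReal NNReal

theorem brasco_lemmaA2 (p : ℝ) (hp : 1 < p) (g : ℝ → ℝ) (hg : Monotone g)
    (hgd : Differentiable ℝ g) (G : ℝ → ℝ)
    (hG : ∀ t, G t = ∫ τ in (0:ℝ)..t, (deriv g τ) ^ (1 / p)) (a b : ℝ) :
    |G a - G b| ^ p ≤ Jp p (a - b) * (g a - g b) := by
  have hp0 : (0:ℝ) < p := lt_trans one_pos hp
  wlog hab : b ≤ a with Hwlog
  · have h := Hwlog p hp g hg hgd G hG b a hp0 (le_of_not_ge hab)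
    calc |G a - G b| ^ p = |G b - G a| ^ p := by rw [abs_sub_comm]
      _ ≤ Jp p (b - a) * (g b - g a) := h
      _ = Jp p (a - b) * (g a - g b) := by
          simp only [Jp, abs_sub_comm b a]; ring
  rcases hab.eq_or_lt with rfl | hlt
  · simp [Jp, Real.zero_rpow hp0.ne']
  have hder : ∀ x, HasDerivAt g (deriv g x) x := fun x => (hgd x).hasDerivAt
  -- nonnegativity of the derivative
  have hd0 : ∀ x, 0 ≤ deriv g x := by
    intro x
    have ht : Tendsto (slope g x) (𝓝[>] x) (𝓝 (deriv g x)) :=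
      (hasDerivAt_iff_tendsto_slope.1 (hder x)).mono_left
        (nhdsWithin_mono x fun y hy => Set.mem_compl_singleton_iff.2 (ne_of_gt hy))
    refine ge_of_tendsto ht ?_
    filter_upwards [self_mem_nhdsWithin] with y hy
    rw [slope_def_field]
    exact div_nonneg (sub_nonneg.2 (hg (le_of_lt hy))) (sub_nonneg.2 (le_of_lt hy))
  set f : ℝ → ℝ := fun τ => (deriv g τ) ^ (1 / p) with hfdef
  have hf0 : ∀ x, 0 ≤ f x := fun x => Real.rpow_nonneg (hd0 x) _
  -- integrability of deriv g on intervals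
  have hgint : ∀ u v : ℝ, IntervalIntegrable (deriv g) volume u v := fun u v =>
    intervalIntegral.intervalIntegrable_deriv_of_nonneg hgd.continuous.continuousOn
      (fun x _ => hder x) (fun x _ => hd0 x)
  have hfmeas : Measurable f :=
    (Real.continuous_rpow_const (by positivity : (0:ℝ) ≤ 1/p)).measurable.comp
      (measurable_deriv g)
  -- pointwise bound giving integrability of f
  have hfle : ∀ x, f x ≤ 1 + deriv g x := by
    intro x
    rcases le_total (deriv g x) 1 with h1 | h1
    · have : f x ≤ 1 := Real.rpow_le_one (hd0 x) h1 (by positivity)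
      linarith [hd0 x]
    · have h2 : f x ≤ (deriv g x) ^ (1:ℝ) :=
        Real.rpow_le_rpow_of_exponent_le h1
          (by rw [div_le_one hp0]; linarith)
      rw [Real.rpow_one] at h2; linarith
  have hfint : ∀ u v : ℝ, IntervalIntegrable f volume u v := by
    intro u v
    have hbig : IntervalIntegrable (fun x => 1 + deriv g x) volume u v :=
      intervalIntegrable_const.add (hgint u v)
    refine hbig.mono_fun hfmeas.aestronglyMeasurable (ae_of_all _ fun x => ?_)
    show ‖f x‖ ≤ ‖1 + deriv g x‖
    rw [Real.norm_of_nonneg (hf0 x), Real.norm_of_nonneg (by linarith [hd0 x, hfle x])]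
    exact hfle x
  have hGab : G a - G b = ∫ x in b..a, f x := by
    rw [hG a, hG b]
    exact intervalIntegral.integral_interval_sub_left (hfint 0 a) (hfint 0 b)
  have hFTC : ∫ x in b..a, deriv g x = g a - g b :=
    intervalIntegral.integral_eq_sub_of_hasDerivAt (fun x _ => hder x) (hgint b a)
  -- Hölder's inequality on `Ioc b a`
  set q := Real.conjExponent p with hqdef
  have hpq : p.HolderConjugate q := Real.HolderConjugate.conjExponent hp
  set μ := volume.restrict (Set.Ioc b a) with hμ
  haveI : IsFiniteMeasure μ := ⟨by
    rw [hμ, Measure.restrict_apply_univ]; exact measure_Ioc_lt_top⟩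
  have hmem1 : MemLp (deriv g) 1 μ := memLp_one_iff_integrable.2 ((hgint b a).1)
  have hmemf : MemLp f (ENNReal.ofReal p) μ := by
    have h1 := hmem1.norm_rpow_div (ENNReal.ofReal (1/p))
    have h2 : (1 : ℝ≥0∞) / ENNReal.ofReal (1/p) = ENNReal.ofReal p := by
      rw [one_div, one_div, ENNReal.ofReal_inv_of_pos hp0, inv_inv]
    have h3 : (ENNReal.ofReal (1/p)).toReal = 1/p :=
      ENNReal.toReal_ofReal (by positivity)
    rw [h2, h3] at h1
    have h4 : f = fun x => ‖deriv g x‖ ^ (1/p) :=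
      funext fun x => by rw [Real.norm_of_nonneg (hd0 x)]
    rw [h4]; exact h1
  have hmemc : MemLp (fun _ : ℝ => (1:ℝ)) (ENNReal.ofReal q) μ := memLp_const 1
  have hHold : ∫ x, f x * 1 ∂μ ≤
      (∫ x, f x ^ p ∂μ) ^ (1/p) * (∫ x, (1:ℝ) ^ q ∂μ) ^ (1/q) :=
    integral_mul_le_Lp_mul_Lq_of_nonneg hpq (ae_of_all _ fun x => hf0 x)
      (ae_of_all _ fun _ => zero_le_one) hmemf hmemc
  -- simplify the three integrals
  have hIeq : ∫ x, f x ^ p ∂μ = g a - g b := by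
    have : ∀ x, f x ^ p = deriv g x := by
      intro x
      rw [hfdef, ← Real.rpow_mul (hd0 x), one_div_mul_cancel hp0.ne', Real.rpow_one]
    calc ∫ x, f x ^ p ∂μ = ∫ x, deriv g x ∂μ := by simp_rw [this]
      _ = ∫ x in b..a, deriv g x := (intervalIntegral.integral_of_le hab).symm
      _ = g a - g b := hFTC
  have hCeq : ∫ x, (1:ℝ) ^ q ∂μ = a - b := by
    simp only [Real.one_rpow]
    rw [hμ, integral_const, smul_eq_mul, mul_one, measureReal_restrict_apply_univ,
      Real.volume_real_Ioc_of_le hab]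
  have hGeq : G a - G b = ∫ x, f x ∂μ := by
    rw [hGab, intervalIntegral.integral_of_le hab]
  have hGnn : 0 ≤ G a - G b := by
    rw [hGeq]; exact integral_nonneg hf0
  have hgnn : (0:ℝ) ≤ g a - g b := sub_nonneg.2 (hg hab)
  have habnn : (0:ℝ) ≤ a - b := by linarith
  have hkey : G a - G b ≤ (g a - g b) ^ (1/p) * (a - b) ^ (1/q) := by
    rw [hGeq]
    simpa only [mul_one, hIeq, hCeq] using hHold
  have hJp : Jp p (a - b) = (a - b) ^ (p - 1) := by
    have h0 : (0:ℝ) < a - b := sub_pos.2 hlt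
    rw [Jp, abs_of_pos h0, show p - 1 = (p - 2) + 1 by ring,
      Real.rpow_add_one h0.ne']
  calc |G a - G b| ^ p = (G a - G b) ^ p := by rw [abs_of_nonneg hGnn]
    _ ≤ ((g a - g b) ^ (1/p) * (a - b) ^ (1/q)) ^ p :=
        Real.rpow_le_rpow hGnn hkey hp0.le
    _ = (g a - g b) * (a - b) ^ (p - 1) := by
        rw [Real.mul_rpow (Real.rpow_nonneg hgnn _) (Real.rpow_nonneg habnn _),
          ← Real.rpow_mul hgnn, ← Real.rpow_mul habnn,
          one_div_mul_cancel hp0.ne', Real.rpow_one,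
          show 1/q * p = p / q by ring, hpq.div_conj_eq_sub_one]
    _ = Jp p (a - b) * (g a - g b) := by rw [hJp]; ring
end

section
/- If a - b - c + d ≠ 0 or a - b = c - d, then 3·2^(p-1)·(J_p(a−b) − J_p(c−d)) · sign(a−b−c+d) ≥ |a−b−c+d|^(p-1); equivalently, for all reals a,b,c,d, (J_p(a−b) − J_p(c−d))·((a−c)−(b−d)) ≥ (1/(3·2^(p−1)))·|a−b−c+d|^p, i.e. 3·2^(p−1)(J_p(a−b) − J_p(c−d)) ≥ J_p((a−c)−(b−d)) in the sense that the difference times (a−b−c+d) is nonnegative. -/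
lemma rpow_sub_one_mul {q t : ℝ} (hq : 1 ≤ q) (ht : 0 ≤ t) :
    t ^ (q - 1) * t = t ^ q := by
  rcases eq_or_lt_of_le ht with h | h
  · rw [← h, mul_zero, Real.zero_rpow (by linarith : q ≠ 0)]
  · rw [← Real.rpow_add_one h.ne' (q - 1)]
    norm_num

lemma Jp_of_nonneg {p t : ℝ} (hp : 2 ≤ p) (ht : 0 ≤ t) : Jp p t = t ^ (p - 1) := by
  rcases eq_or_lt_of_le ht with h | h
  · rw [Jp, ← h, mul_zero, Real.zero_rpow (by linarith : p - 1 ≠ 0)]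
  · rw [Jp, abs_of_pos h, ← Real.rpow_add_one h.ne' (p - 2)]
    ring_nf

lemma rpow_superadd {q u v : ℝ} (hq : 1 ≤ q) (hu : 0 ≤ u) (hv : 0 ≤ v) :
    u ^ q + v ^ q ≤ (u + v) ^ q := by
  have huv : 0 ≤ u + v := by linarith
  have h1 : u ^ q ≤ (u + v) ^ (q - 1) * u := by
    rw [← rpow_sub_one_mul hq hu]
    exact mul_le_mul_of_nonneg_right
      (Real.rpow_le_rpow hu (by linarith) (by linarith)) hu
  have h2 : v ^ q ≤ (u + v) ^ (q - 1) * v := by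
    rw [← rpow_sub_one_mul hq hv]
    exact mul_le_mul_of_nonneg_right
      (Real.rpow_le_rpow hv (by linarith) (by linarith)) hv
  calc u ^ q + v ^ q ≤ (u + v) ^ (q - 1) * u + (u + v) ^ (q - 1) * v := by linarith
    _ = (u + v) ^ (q - 1) * (u + v) := by ring
    _ = (u + v) ^ q := rpow_sub_one_mul hq huv

lemma key_aux {p x y : ℝ} (hp : 2 ≤ p) (hyx : y ≤ x) (hs : 0 ≤ x + y) :
    |x - y| ^ p ≤ 3 * (2:ℝ) ^ (p - 1) * ((Jp p x - Jp p y) * (x - y)) := by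
  have hx : 0 ≤ x := by linarith
  have hz : 0 ≤ x - y := by linarith
  have habs : |x - y| = x - y := abs_of_nonneg hz
  have h2p : (0:ℝ) < (2:ℝ) ^ (p - 1) := Real.rpow_pos_of_pos (by norm_num) _
  have h2p1 : (1:ℝ) ≤ (2:ℝ) ^ (p - 1) := Real.one_le_rpow (by norm_num) (by linarith)
  rcases le_or_gt 0 y with hy | hy
  · -- both nonneg
    rw [habs, Jp_of_nonneg hp hx, Jp_of_nonneg hp hy]
    have hsup : y ^ (p - 1) + (x - y) ^ (p - 1) ≤ x ^ (p - 1) := by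
      have := rpow_superadd (q := p - 1) (by linarith) hy hz
      rw [show y + (x - y) = x by ring] at this
      exact this
    have hzp : (x - y) ^ (p - 1) * (x - y) = (x - y) ^ p :=
      rpow_sub_one_mul (by linarith : (1:ℝ) ≤ p) hz
    have hdz : 0 ≤ (x ^ (p - 1) - y ^ (p - 1)) * (x - y) := by
      apply mul_nonneg _ hz
      have := Real.rpow_le_rpow hy hyx (by linarith : (0:ℝ) ≤ p - 1)
      linarith
    have step1 : (x - y) ^ p ≤ (x ^ (p - 1) - y ^ (p - 1)) * (x - y) := by
      rw [← hzp]
      exact mul_le_mul_of_nonneg_right (by linarith) hz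
    nlinarith [mul_nonneg (le_of_lt h2p) hdz]
  · -- y < 0, so x > 0 and x ≥ (x - y)/2
    have hJy : Jp p y = -(-y) ^ (p - 1) := by
      have : Jp p (-(-y)) = - Jp p (-y) := Jp_neg p (-y)
      rw [neg_neg] at this
      rw [this, Jp_of_nonneg hp (by linarith : (0:ℝ) ≤ -y)]
    have hJx : Jp p x = x ^ (p - 1) := Jp_of_nonneg hp hx
    have hxz : (x - y) / 2 ≤ x := by linarith
    have hzd : 0 ≤ (x - y) / 2 := by linarith
    have hmono : ((x - y) / 2) ^ (p - 1) ≤ x ^ (p - 1) :=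
      Real.rpow_le_rpow hzd hxz (by linarith)
    have hdiv : ((x - y) / 2) ^ (p - 1) = (x - y) ^ (p - 1) / 2 ^ (p - 1) :=
      Real.div_rpow hz (by norm_num) _
    have hnegy : 0 ≤ (-y) ^ (p - 1) := Real.rpow_nonneg (by linarith) _
    have hJdiff : (x - y) ^ (p - 1) / 2 ^ (p - 1) ≤ Jp p x - Jp p y := by
      rw [hJx, hJy, ← hdiv]; linarith
    have hzp : (x - y) ^ (p - 1) * (x - y) = (x - y) ^ p :=
      rpow_sub_one_mul (by linarith : (1:ℝ) ≤ p) hz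
    have key : (x - y) ^ (p - 1) / 2 ^ (p - 1) * (x - y) ≤ (Jp p x - Jp p y) * (x - y) :=
      mul_le_mul_of_nonneg_right hJdiff hz
    have hrp : 0 ≤ (x - y) ^ (p - 1) := Real.rpow_nonneg hz _
    have expand : 3 * (2:ℝ) ^ (p - 1) * ((x - y) ^ (p - 1) / 2 ^ (p - 1) * (x - y))
        = 3 * ((x - y) ^ (p - 1) * (x - y)) := by
      field_simp
    rw [habs]
    calc (x - y) ^ p = (x - y) ^ (p - 1) * (x - y) := hzp.symm
      _ ≤ 3 * ((x - y) ^ (p - 1) * (x - y)) := by nlinarith [mul_nonneg hrp hz]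
      _ = 3 * (2:ℝ) ^ (p - 1) * ((x - y) ^ (p - 1) / 2 ^ (p - 1) * (x - y)) := expand.symm
      _ ≤ 3 * (2:ℝ) ^ (p - 1) * ((Jp p x - Jp p y) * (x - y)) :=
          mul_le_mul_of_nonneg_left key (by positivity)

lemma key_le {p : ℝ} (hp : 2 ≤ p) {x y : ℝ} (hyx : y ≤ x) :
    |x - y| ^ p ≤ 3 * (2:ℝ) ^ (p - 1) * ((Jp p x - Jp p y) * (x - y)) := by
  rcases le_or_gt 0 (x + y) with hs | hs
  · exact key_aux hp hyx hs
  · have h := key_aux hp (by linarith : -x ≤ -y) (by linarith : (0:ℝ) ≤ -y + -x)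
    rw [Jp_neg, Jp_neg] at h
    have e0 : -y - -x = x - y := by ring
    rw [e0] at h
    calc |x - y| ^ p ≤ 3 * (2:ℝ) ^ (p - 1) * ((-Jp p y - -Jp p x) * (x - y)) := h
      _ = 3 * (2:ℝ) ^ (p - 1) * ((Jp p x - Jp p y) * (x - y)) := by ring

lemma key {p : ℝ} (hp : 2 ≤ p) (x y : ℝ) :
    |x - y| ^ p ≤ 3 * (2:ℝ) ^ (p - 1) * ((Jp p x - Jp p y) * (x - y)) := by
  rcases le_total y x with h | h
  · exact key_le hp h
  · have hh := key_le hp h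
    have e1 : |y - x| = |x - y| := abs_sub_comm y x
    rw [e1] at hh
    calc |x - y| ^ p ≤ 3 * (2:ℝ) ^ (p - 1) * ((Jp p y - Jp p x) * (y - x)) := hh
      _ = 3 * (2:ℝ) ^ (p - 1) * ((Jp p x - Jp p y) * (x - y)) := by ring

theorem pointwise_rearrange (p : ℝ) (hp : 2 ≤ p) (a b c d : ℝ) :
    |a - b - c + d| ^ p
      ≤ 3 * (2 : ℝ) ^ (p - 1) * ((Jp p (a - b) - Jp p (c - d)) * (a - b - c + d)) := by
  have h := key hp (a - b) (c - d)
  have e1 : a - b - (c - d) = a - b - c + d := by ring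
  rw [e1] at h
  exact h
end

section
/- Let α > 0, 0 < q < ∞, and suppose B_r(x₀) ⊂ B_R(x₁). Then for every u ∈ L^q_α(ℝⁿ), Tail_{q,α}(u; x₀, r)^q ≤ (r/R)^α · (R/(R − |x₁ − x₀|))^{n+α} · Tail_{q,α}(u; x₁, R)^q + r^{−n} ‖u‖_{L^q(B_R(x₁))}^q. -/
open MeasureTheory Metric Set

/-- The tail quantity `Tail_{q,α}(u; x₀, R)`. -/
noncomputable def Tail (n : ℕ) (q α : ℝ) (u : EuclideanSpace ℝ (Fin n) → ℝ)
    (x₀ : EuclideanSpace ℝ (Fin n)) (R : ℝ) : ℝ :=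
  (R ^ α * ∫ x in (ball x₀ R)ᶜ, |u x| ^ q / ‖x - x₀‖ ^ ((n : ℝ) + α)) ^ (1 / q)


variable {n : ℕ}

lemma aux_meas {q α : ℝ} (hα : 0 < α) (u : EuclideanSpace ℝ (Fin n) → ℝ)
    (hu : Integrable fun x => |u x| ^ q / (1 + ‖x‖ ^ ((n : ℝ) + α))) :
    AEStronglyMeasurable (fun x => |u x| ^ q) (volume : Measure (EuclideanSpace ℝ (Fin n))) := by
  have hA : Continuous fun x : EuclideanSpace ℝ (Fin n) => 1 + ‖x‖ ^ ((n : ℝ) + α) :=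
    continuous_const.add (continuous_norm.rpow_const (fun x => Or.inr (by positivity)))
  have h := hu.aestronglyMeasurable.mul hA.aestronglyMeasurable
  have : (fun x : EuclideanSpace ℝ (Fin n) =>
      |u x| ^ q / (1 + ‖x‖ ^ ((n : ℝ) + α)) * (1 + ‖x‖ ^ ((n : ℝ) + α)))
      = fun x => |u x| ^ q := by
    funext x
    exact div_mul_cancel₀ _ (by positivity)
  rw [← this]
  exact h

lemma aux_meas_B {α : ℝ} (hα : 0 < α) (y : EuclideanSpace ℝ (Fin n)) :
    AEStronglyMeasurable (fun x : EuclideanSpace ℝ (Fin n) => ‖x - y‖ ^ ((n : ℝ) + α))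
      (volume : Measure (EuclideanSpace ℝ (Fin n))) :=
  (((continuous_id.sub continuous_const).norm).rpow_const
    (fun _ => Or.inr (by positivity))).aestronglyMeasurable

lemma aux_int_compl {q α : ℝ} (hα : 0 < α) (u : EuclideanSpace ℝ (Fin n) → ℝ)
    (hu : Integrable fun x => |u x| ^ q / (1 + ‖x‖ ^ ((n : ℝ) + α)))
    (y : EuclideanSpace ℝ (Fin n)) {ρ : ℝ} (hρ : 0 < ρ) :
    IntegrableOn (fun x => |u x| ^ q / ‖x - y‖ ^ ((n : ℝ) + α)) (ball y ρ)ᶜ := by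
  have hnα : (0:ℝ) < (n : ℝ) + α := by positivity
  set C : ℝ := ρ ^ (-((n : ℝ) + α)) + (1 + ‖y‖ / ρ) ^ ((n : ℝ) + α) with hC
  have hC0 : 0 < C := by positivity
  refine Integrable.mono (hu.restrict.const_mul C)
    (((aux_meas hα u hu).aemeasurable.div (aux_meas_B hα y).aemeasurable).aestronglyMeasurable.restrict) ?_
  rw [ae_restrict_iff' measurableSet_ball.compl]
  filter_upwards with x hx
  have hdist : ρ ≤ ‖x - y‖ := by
    have := hx
    simp only [mem_compl_iff, mem_ball, not_lt, dist_eq_norm] at this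
    exact this
  have hB0 : (0:ℝ) < ‖x - y‖ ^ ((n : ℝ) + α) := Real.rpow_pos_of_pos (lt_of_lt_of_le hρ hdist) _
  have hA0 : (0:ℝ) < 1 + ‖x‖ ^ ((n : ℝ) + α) := by positivity
  have hfx : (0:ℝ) ≤ |u x| ^ q := Real.rpow_nonneg (abs_nonneg _) _
  rw [Real.norm_of_nonneg (div_nonneg hfx hB0.le),
    Real.norm_of_nonneg (mul_nonneg hC0.le (div_nonneg hfx hA0.le))]
  have key : 1 + ‖x‖ ^ ((n : ℝ) + α) ≤ C * ‖x - y‖ ^ ((n : ℝ) + α) := by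
    have h1 : (1:ℝ) ≤ ρ ^ (-((n : ℝ) + α)) * ‖x - y‖ ^ ((n : ℝ) + α) := by
      have hmono : ρ ^ ((n:ℝ)+α) ≤ ‖x - y‖ ^ ((n:ℝ)+α) :=
        Real.rpow_le_rpow hρ.le hdist hnα.le
      rw [Real.rpow_neg hρ.le, inv_mul_eq_div, le_div_iff₀ (by positivity)]
      linarith
    have h2 : ‖x‖ ^ ((n : ℝ) + α)
        ≤ (1 + ‖y‖ / ρ) ^ ((n : ℝ) + α) * ‖x - y‖ ^ ((n : ℝ) + α) := by
      rw [← Real.mul_rpow (by positivity) (norm_nonneg _)]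
      apply Real.rpow_le_rpow (norm_nonneg _) _ hnα.le
      have h3 : ‖x‖ ≤ ‖x - y‖ + ‖y‖ := by
        have := norm_add_le (x - y) y; simpa using this
      have h4 : ‖y‖ ≤ ‖y‖ / ρ * ‖x - y‖ := by
        rw [div_mul_eq_mul_div, le_div_iff₀ hρ]
        exact mul_le_mul_of_nonneg_left hdist (norm_nonneg _)
      nlinarith [norm_nonneg (x - y)]
    calc 1 + ‖x‖ ^ ((n : ℝ) + α)
        ≤ ρ ^ (-((n : ℝ) + α)) * ‖x - y‖ ^ ((n : ℝ) + α)
          + (1 + ‖y‖ / ρ) ^ ((n : ℝ) + α) * ‖x - y‖ ^ ((n : ℝ) + α) := add_le_add h1 h2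
      _ = C * ‖x - y‖ ^ ((n : ℝ) + α) := by rw [hC]; ring
  rw [mul_div_assoc', div_le_div_iff₀ hB0 hA0]
  nlinarith

lemma aux_int_ball {q α : ℝ} (hα : 0 < α) (u : EuclideanSpace ℝ (Fin n) → ℝ)
    (hu : Integrable fun x => |u x| ^ q / (1 + ‖x‖ ^ ((n : ℝ) + α)))
    (y : EuclideanSpace ℝ (Fin n)) {ρ : ℝ} (hρ : 0 < ρ) :
    IntegrableOn (fun x => |u x| ^ q) (ball y ρ) := by
  have hnα : (0:ℝ) < (n : ℝ) + α := by positivity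
  set C : ℝ := 1 + (‖y‖ + ρ) ^ ((n : ℝ) + α) with hC
  have hC0 : 0 < C := by positivity
  refine Integrable.mono (hu.restrict.const_mul C) ((aux_meas hα u hu).restrict) ?_
  rw [ae_restrict_iff' measurableSet_ball]
  filter_upwards with x hx
  have hdist : ‖x - y‖ < ρ := by rwa [mem_ball, dist_eq_norm] at hx
  have hA0 : (0:ℝ) < 1 + ‖x‖ ^ ((n : ℝ) + α) := by positivity
  have hfx : (0:ℝ) ≤ |u x| ^ q := Real.rpow_nonneg (abs_nonneg _) _
  rw [Real.norm_of_nonneg hfx,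
    Real.norm_of_nonneg (mul_nonneg hC0.le (div_nonneg hfx hA0.le))]
  have hxb : ‖x‖ ≤ ‖y‖ + ρ := by
    have h3 : ‖x‖ ≤ ‖x - y‖ + ‖y‖ := by have := norm_add_le (x - y) y; simpa using this
    linarith
  have key : 1 + ‖x‖ ^ ((n : ℝ) + α) ≤ C := by
    have := Real.rpow_le_rpow (norm_nonneg x) hxb hnα.le
    rw [hC]; linarith
  rw [mul_div_assoc', le_div_iff₀ hA0]
  nlinarith

theorem tail_shrink (n : ℕ) (α q r R : ℝ) (hα : 0 < α) (hq : 0 < q)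
    (hr : 0 < r) (hR : 0 < R)
    (x₀ x₁ : EuclideanSpace ℝ (Fin n)) (hsub : ball x₀ r ⊆ ball x₁ R)
    (u : EuclideanSpace ℝ (Fin n) → ℝ)
    (hu : Integrable fun x => |u x| ^ q / (1 + ‖x‖ ^ ((n : ℝ) + α))) :
    Tail n q α u x₀ r ^ q
      ≤ (r / R) ^ α * (R / (R - ‖x₁ - x₀‖)) ^ ((n : ℝ) + α) * Tail n q α u x₁ R ^ q
        + r ^ (-(n : ℝ)) * ∫ x in ball x₁ R, |u x| ^ q := by
  have hnα : (0:ℝ) < (n : ℝ) + α := by positivity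
  -- unfold Tail ^ q
  have tail_pow : ∀ (y : EuclideanSpace ℝ (Fin n)) (ρ : ℝ), 0 < ρ →
      Tail n q α u y ρ ^ q
        = ρ ^ α * ∫ x in (ball y ρ)ᶜ, |u x| ^ q / ‖x - y‖ ^ ((n : ℝ) + α) := by
    intro y ρ hρ
    have h0 : 0 ≤ ρ ^ α * ∫ x in (ball y ρ)ᶜ, |u x| ^ q / ‖x - y‖ ^ ((n : ℝ) + α) :=
      mul_nonneg (Real.rpow_nonneg hρ.le _) (integral_nonneg fun x =>
        div_nonneg (Real.rpow_nonneg (abs_nonneg _) _) (Real.rpow_nonneg (norm_nonneg _) _))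
    rw [Tail, ← Real.rpow_mul h0, one_div, inv_mul_cancel₀ hq.ne', Real.rpow_one]
  rw [tail_pow x₀ r hr, tail_pow x₁ R hR]
  set f := fun x : EuclideanSpace ℝ (Fin n) => |u x| ^ q with hf
  have hf0 : ∀ x, 0 ≤ f x := fun x => Real.rpow_nonneg (abs_nonneg _) _
  have hg0 : IntegrableOn (fun x => f x / ‖x - x₀‖ ^ ((n : ℝ) + α)) (ball x₀ r)ᶜ :=
    aux_int_compl hα u hu x₀ hr
  have hg1 : IntegrableOn (fun x => f x / ‖x - x₁‖ ^ ((n : ℝ) + α)) (ball x₁ R)ᶜ :=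
    aux_int_compl hα u hu x₁ hR
  have hfB : IntegrableOn f (ball x₁ R) := aux_int_ball hα u hu x₁ hR
  have hd : ‖x₁ - x₀‖ < R := by
    have h := hsub (mem_ball_self hr)
    rw [mem_ball, dist_eq_norm] at h
    rwa [norm_sub_rev] at h
  have hRd : 0 < R - ‖x₁ - x₀‖ := sub_pos.2 hd
  have hcompl : (ball x₁ R)ᶜ ⊆ (ball x₀ r)ᶜ := Set.compl_subset_compl.2 hsub
  set K : ℝ := (R / (R - ‖x₁ - x₀‖)) ^ ((n : ℝ) + α) with hK
  have hK0 : 0 < K := Real.rpow_pos_of_pos (div_pos hR hRd) _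
  -- split the integral
  have hsetsplit : (ball x₀ r)ᶜ = (ball x₁ R)ᶜ ∪ (ball x₁ R ∩ (ball x₀ r)ᶜ) := by
    ext x
    by_cases hx : x ∈ ball x₁ R
    · simp only [Set.mem_union, Set.mem_inter_iff, Set.mem_compl_iff]
      tauto
    · simp only [Set.mem_union, Set.mem_inter_iff, Set.mem_compl_iff]
      have := fun h : x ∈ ball x₀ r => hsub h
      tauto
  have hdisj : Disjoint ((ball x₁ R)ᶜ) (ball x₁ R ∩ (ball x₀ r)ᶜ) :=
    disjoint_compl_left.mono_right Set.inter_subset_left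
  have hsplit : ∫ x in (ball x₀ r)ᶜ, f x / ‖x - x₀‖ ^ ((n : ℝ) + α)
      = (∫ x in (ball x₁ R)ᶜ, f x / ‖x - x₀‖ ^ ((n : ℝ) + α))
        + ∫ x in ball x₁ R ∩ (ball x₀ r)ᶜ, f x / ‖x - x₀‖ ^ ((n : ℝ) + α) := by
    nth_rewrite 1 [hsetsplit]
    exact setIntegral_union hdisj (measurableSet_ball.inter measurableSet_ball.compl)
      (hg0.mono_set hcompl) (hg0.mono_set Set.inter_subset_right)
  -- first bound
  have hI1 : (∫ x in (ball x₁ R)ᶜ, f x / ‖x - x₀‖ ^ ((n : ℝ) + α))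
      ≤ K * ∫ x in (ball x₁ R)ᶜ, f x / ‖x - x₁‖ ^ ((n : ℝ) + α) := by
    rw [← integral_const_mul]
    apply setIntegral_mono_on (hg0.mono_set hcompl) (hg1.const_mul K)
      measurableSet_ball.compl
    intro x hx
    have hdist : R ≤ ‖x - x₁‖ := by
      simpa only [Set.mem_compl_iff, mem_ball, not_lt, dist_eq_norm] using hx
    have hx0 : r ≤ ‖x - x₀‖ := by
      have := hcompl hx
      simpa only [Set.mem_compl_iff, mem_ball, not_lt, dist_eq_norm] using this
    have hB0 : (0:ℝ) < ‖x - x₀‖ ^ ((n : ℝ) + α) :=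
      Real.rpow_pos_of_pos (lt_of_lt_of_le hr hx0) _
    have hB1 : (0:ℝ) < ‖x - x₁‖ ^ ((n : ℝ) + α) :=
      Real.rpow_pos_of_pos (lt_of_lt_of_le hR hdist) _
    have htri : ‖x - x₁‖ ≤ ‖x - x₀‖ + ‖x₁ - x₀‖ := by
      have := norm_add_le (x - x₀) (x₀ - x₁)
      simp only [sub_add_sub_cancel] at this
      rw [norm_sub_rev x₀ x₁] at this
      exact this
    have hlin : ‖x - x₁‖ ≤ R / (R - ‖x₁ - x₀‖) * ‖x - x₀‖ := by
      rw [div_mul_eq_mul_div, le_div_iff₀ hRd]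
      have hd0 : 0 ≤ ‖x₁ - x₀‖ := norm_nonneg _
      nlinarith
    have hkey : ‖x - x₁‖ ^ ((n : ℝ) + α) ≤ K * ‖x - x₀‖ ^ ((n : ℝ) + α) := by
      rw [hK, ← Real.mul_rpow (by positivity) (norm_nonneg _)]
      exact Real.rpow_le_rpow (norm_nonneg _) hlin hnα.le
    rw [mul_div_assoc', div_le_div_iff₀ hB0 hB1]
    nlinarith [hf0 x]
  -- second bound
  have hI2 : (∫ x in ball x₁ R ∩ (ball x₀ r)ᶜ, f x / ‖x - x₀‖ ^ ((n : ℝ) + α))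
      ≤ r ^ (-((n : ℝ) + α)) * ∫ x in ball x₁ R, f x := by
    have step1 : (∫ x in ball x₁ R ∩ (ball x₀ r)ᶜ, f x / ‖x - x₀‖ ^ ((n : ℝ) + α))
        ≤ ∫ x in ball x₁ R ∩ (ball x₀ r)ᶜ, r ^ (-((n : ℝ) + α)) * f x := by
      apply setIntegral_mono_on
        (hg0.mono_set Set.inter_subset_right)
        ((hfB.mono_set Set.inter_subset_left).const_mul _)
        (measurableSet_ball.inter measurableSet_ball.compl)
      intro x hx
      have hx0 : r ≤ ‖x - x₀‖ := by
        have := hx.2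
        simpa only [Set.mem_compl_iff, mem_ball, not_lt, dist_eq_norm] using this
      have hB0 : (0:ℝ) < ‖x - x₀‖ ^ ((n : ℝ) + α) :=
        Real.rpow_pos_of_pos (lt_of_lt_of_le hr hx0) _
      have hmono : r ^ ((n : ℝ) + α) ≤ ‖x - x₀‖ ^ ((n : ℝ) + α) :=
        Real.rpow_le_rpow hr.le hx0 hnα.le
      rw [Real.rpow_neg hr.le, inv_mul_eq_div, div_le_div_iff₀ hB0 (by positivity)]
      nlinarith [hf0 x]
    have step2 : (∫ x in ball x₁ R ∩ (ball x₀ r)ᶜ, r ^ (-((n : ℝ) + α)) * f x)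
        ≤ ∫ x in ball x₁ R, r ^ (-((n : ℝ) + α)) * f x := by
      apply setIntegral_mono_set (hfB.const_mul _)
        (Filter.Eventually.of_forall fun x => mul_nonneg (Real.rpow_nonneg hr.le _) (hf0 x))
        (HasSubset.Subset.eventuallyLE Set.inter_subset_left)
    rw [← integral_const_mul]
    exact le_trans step1 step2
  -- assemble
  have hrR : r ^ α = (r / R) ^ α * R ^ α := by
    rw [Real.div_rpow hr.le hR.le, div_mul_cancel₀]
    exact (Real.rpow_pos_of_pos hR _).ne'
  have hrn : r ^ α * r ^ (-((n : ℝ) + α)) = r ^ (-(n : ℝ)) := by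
    rw [← Real.rpow_add hr]
    ring_nf
  have hJ0 : 0 ≤ ∫ x in (ball x₁ R)ᶜ, f x / ‖x - x₁‖ ^ ((n : ℝ) + α) :=
    integral_nonneg fun x => div_nonneg (hf0 x) (Real.rpow_nonneg (norm_nonneg _) _)
  have hF0 : 0 ≤ ∫ x in ball x₁ R, f x := integral_nonneg hf0
  have hrα : (0:ℝ) < r ^ α := Real.rpow_pos_of_pos hr _
  calc r ^ α * ∫ x in (ball x₀ r)ᶜ, f x / ‖x - x₀‖ ^ ((n : ℝ) + α)
      = r ^ α * (∫ x in (ball x₁ R)ᶜ, f x / ‖x - x₀‖ ^ ((n : ℝ) + α))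
        + r ^ α * ∫ x in ball x₁ R ∩ (ball x₀ r)ᶜ, f x / ‖x - x₀‖ ^ ((n : ℝ) + α) := by
        rw [hsplit]; ring
    _ ≤ r ^ α * (K * ∫ x in (ball x₁ R)ᶜ, f x / ‖x - x₁‖ ^ ((n : ℝ) + α))
        + r ^ α * (r ^ (-((n : ℝ) + α)) * ∫ x in ball x₁ R, f x) := by
        have := mul_le_mul_of_nonneg_left hI1 hrα.le
        have := mul_le_mul_of_nonneg_left hI2 hrα.le
        linarith
    _ = (r / R) ^ α * K * (R ^ α * ∫ x in (ball x₁ R)ᶜ, f x / ‖x - x₁‖ ^ ((n : ℝ) + α))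
        + r ^ (-(n : ℝ)) * ∫ x in ball x₁ R, f x := by
        have e1 : r ^ α * (K * ∫ x in (ball x₁ R)ᶜ, f x / ‖x - x₁‖ ^ ((n : ℝ) + α))
            = (r / R) ^ α * K * (R ^ α * ∫ x in (ball x₁ R)ᶜ, f x / ‖x - x₁‖ ^ ((n : ℝ) + α)) := by
          rw [hrR]; ring
        have e2 : r ^ α * (r ^ (-((n : ℝ) + α)) * ∫ x in ball x₁ R, f x)
            = r ^ (-(n : ℝ)) * ∫ x in ball x₁ R, f x := by
          rw [← hrn]; ring
        rw [e1, e2]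
end

section
/- Let p ≥ 2 and β ≥ 1, δ > 0, M > 0. Define F(t) = (min{t⁺, M} + δ)^β − δ^β where t⁺ = max{t,0}, and let 𝓕(t) = ∫₀ᵗ F(τ) dτ. Then for all t ∈ ℝ: 𝓕(t) ≥ ((t)⁺_M + δ)^{β+1}/(2(β+1)) − 2 δ^{β+1}, where (t)⁺_M := min{max{t,0}, M}. -/
/-- `F(t) = (min(t⁺, M) + δ)^β − δ^β`. -/
noncomputable def Ffun (β δ M t : ℝ) : ℝ := (min (max t 0) M + δ) ^ β - δ ^ β

/-- `𝓕(t) = ∫₀ᵗ F(τ) dτ`. -/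
noncomputable def Fcal (β δ M t : ℝ) : ℝ := ∫ τ in (0:ℝ)..t, Ffun β δ M τ

lemma Ffun_cont {β δ M : ℝ} (hβ : 0 ≤ β) : Continuous (Ffun β δ M) := by
  unfold Ffun
  exact (((continuous_id.max continuous_const).min continuous_const).add
    continuous_const).rpow_const (fun x => Or.inr hβ) |>.sub continuous_const

lemma Ffun_nonneg {β δ M : ℝ} (hβ : 0 ≤ β) (hδ : 0 < δ) (hM : 0 < M) (t : ℝ) :
    0 ≤ Ffun β δ M t := by
  unfold Ffun
  have h0 : 0 ≤ min (max t 0) M := le_min (le_max_right t 0) hM.le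
  have : δ ^ β ≤ (min (max t 0) M + δ) ^ β :=
    Real.rpow_le_rpow hδ.le (by linarith) hβ
  linarith

lemma Fcal_eq {β δ M : ℝ} (hβ : 1 ≤ β) (hδ : 0 < δ) {s : ℝ} (h0 : 0 ≤ s) (hsM : s ≤ M) :
    Fcal β δ M s = ((s + δ) ^ (β + 1) - δ ^ (β + 1)) / (β + 1) - δ ^ β * s := by
  have h1 : Fcal β δ M s = ∫ τ in (0:ℝ)..s, ((τ + δ) ^ β - δ ^ β) := by
    apply intervalIntegral.integral_congr
    intro τ hτ
    rw [Set.uIcc_of_le h0] at hτ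
    unfold Ffun
    rw [max_eq_left hτ.1, min_eq_left (hτ.2.trans hsM)]
  have hc : Continuous fun τ : ℝ => (τ + δ) ^ β :=
    (continuous_id.add continuous_const).rpow_const (fun x => Or.inr (by linarith))
  rw [h1, intervalIntegral.integral_sub (hc.intervalIntegrable 0 s)
    (intervalIntegrable_const), intervalIntegral.integral_const]
  have h2 : (∫ τ in (0:ℝ)..s, (τ + δ) ^ β) = ∫ τ in (0 + δ)..(s + δ), τ ^ β :=
    intervalIntegral.integral_comp_add_right (fun τ => τ ^ β) δ
  rw [h2, integral_rpow (Or.inl (by linarith))]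
  rw [zero_add]
  ring_nf

lemma key_ineq {β δ : ℝ} (hβ : 1 ≤ β) (hδ : 0 < δ) {s : ℝ} (hs : 0 ≤ s) :
    2 * (β + 1) * (s * δ ^ β) ≤ (s + δ) ^ (β + 1) + (4 * β + 2) * δ ^ (β + 1) := by
  have hb1 : (0:ℝ) < β + 1 := by linarith
  have hβ0 : (0:ℝ) < β := by linarith
  set u : ℝ := (2:ℝ) ^ ((β + 1)⁻¹) with hu
  have hupos : 0 < u := Real.rpow_pos_of_pos two_pos _
  have hconj : (β + 1).HolderConjugate ((β + 1) / β) := by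
    rw [Real.holderConjugate_iff]; constructor
    · linarith
    · field_simp; ring
  have hY := Real.young_inequality_of_nonneg
    (mul_nonneg hs (inv_nonneg.2 hupos.le))
    (mul_nonneg hupos.le (Real.rpow_nonneg hδ.le β)) hconj
  have hab : s * u⁻¹ * (u * δ ^ β) = s * δ ^ β := by
    field_simp
  have huP : u ^ (β + 1) = 2 := by
    rw [hu, ← Real.rpow_mul (by norm_num), inv_mul_cancel₀ hb1.ne', Real.rpow_one]
  have haP : (s * u⁻¹) ^ (β + 1) = s ^ (β + 1) / 2 := by
    rw [Real.mul_rpow hs (inv_nonneg.2 hupos.le), Real.inv_rpow hupos.le, huP,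
      div_eq_mul_inv]
  have hbQ : (u * δ ^ β) ^ ((β + 1) / β) = 2 ^ (β⁻¹) * δ ^ (β + 1) := by
    rw [Real.mul_rpow hupos.le (Real.rpow_nonneg hδ.le β), hu,
      ← Real.rpow_mul (by norm_num), ← Real.rpow_mul hδ.le]
    have e1 : (β + 1)⁻¹ * ((β + 1) / β) = β⁻¹ := by field_simp
    have e2 : β * ((β + 1) / β) = β + 1 := by field_simp
    rw [e1, e2]
  rw [hab, haP, hbQ] at hY
  have h2b : (2:ℝ) ^ (β⁻¹) ≤ 2 := by
    calc (2:ℝ) ^ (β⁻¹) ≤ (2:ℝ) ^ (1:ℝ) :=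
          Real.rpow_le_rpow_of_exponent_le one_le_two (by
            rw [inv_le_one_iff₀]; right; linarith)
      _ = 2 := Real.rpow_one 2
  have hδP : 0 < δ ^ (β + 1) := Real.rpow_pos_of_pos hδ _
  have hsP : s ^ (β + 1) ≤ (s + δ) ^ (β + 1) :=
    Real.rpow_le_rpow hs (by linarith) (by linarith)
  have h2X : 0 < (2:ℝ) ^ (β⁻¹) := Real.rpow_pos_of_pos two_pos _
  have hY2 : 2 * (β + 1) * (s * δ ^ β) ≤ s ^ (β + 1) + 2 * β * (2 ^ (β⁻¹) * δ ^ (β + 1)) := by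
    have e3 : s ^ (β + 1) / 2 / (β + 1) + 2 ^ (β⁻¹) * δ ^ (β + 1) / ((β + 1) / β)
        = (s ^ (β + 1) + 2 * β * (2 ^ (β⁻¹) * δ ^ (β + 1))) / (2 * (β + 1)) := by
      field_simp
    rw [e3] at hY
    have := (le_div_iff₀ (by positivity : (0:ℝ) < 2 * (β + 1))).mp hY
    linarith
  have h4 : 2 * β * (2 ^ (β⁻¹) * δ ^ (β + 1)) ≤ 2 * β * (2 * δ ^ (β + 1)) :=
    mul_le_mul_of_nonneg_left (mul_le_mul_of_nonneg_right h2b hδP.le) (by linarith)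
  nlinarith [hsP, hY2, h4, hδP]

lemma mid_bound {β δ M : ℝ} (hβ : 1 ≤ β) (hδ : 0 < δ) {s : ℝ} (h0 : 0 ≤ s) (hsM : s ≤ M) :
    (s + δ) ^ (β + 1) / (2 * (β + 1)) - 2 * δ ^ (β + 1) ≤ Fcal β δ M s := by
  rw [Fcal_eq hβ hδ h0 hsM]
  have hb2 : (0:ℝ) < 2 * (β + 1) := by linarith
  have hkey := key_ineq hβ hδ h0
  have expand : ((s + δ) ^ (β + 1) - δ ^ (β + 1)) / (β + 1) - δ ^ β * s
      - ((s + δ) ^ (β + 1) / (2 * (β + 1)) - 2 * δ ^ (β + 1))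
      = ((s + δ) ^ (β + 1) + (4 * β + 2) * δ ^ (β + 1) - 2 * (β + 1) * (s * δ ^ β))
        / (2 * (β + 1)) := by
    field_simp; ring
  have h3 : 0 ≤ ((s + δ) ^ (β + 1) + (4 * β + 2) * δ ^ (β + 1)
      - 2 * (β + 1) * (s * δ ^ β)) / (2 * (β + 1)) :=
    div_nonneg (by linarith) hb2.le
  rw [← expand] at h3
  linarith

theorem primitive_lower_bound (p β δ M : ℝ) (hp : 2 ≤ p) (hβ : 1 ≤ β)
    (hδ : 0 < δ) (hM : 0 < M) (t : ℝ) :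
    (min (max t 0) M + δ) ^ (β + 1) / (2 * (β + 1)) - 2 * δ ^ (β + 1)
      ≤ Fcal β δ M t := by
  have hβ0 : (0:ℝ) ≤ β := by linarith
  rcases le_or_gt t 0 with ht | ht
  · -- t ≤ 0 : Fcal t = 0
    have hmm : min (max t 0) M = 0 := by
      rw [max_eq_right ht, min_eq_left hM.le]
    have hF : Fcal β δ M t = 0 := by
      unfold Fcal
      rw [intervalIntegral.integral_congr (g := fun _ : ℝ => (0:ℝ))]
      · simp
      · intro τ hτ
        rw [Set.uIcc_of_ge ht] at hτ
        unfold Ffun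
        rw [max_eq_right hτ.2, min_eq_left hM.le]
        ring
    have h0 := mid_bound (M := M) hβ hδ le_rfl hM.le
    have hF0 : Fcal β δ M 0 = 0 := intervalIntegral.integral_same
    rw [hmm, hF]
    rw [hF0] at h0
    simpa using h0
  · rcases le_or_gt t M with htM | htM
    · -- 0 ≤ t ≤ M
      rw [max_eq_left ht.le, min_eq_left htM]
      exact mid_bound hβ hδ ht.le htM
    · -- M ≤ t
      have hmm : min (max t 0) M = M := by
        rw [max_eq_left (by linarith), min_eq_right (by linarith)]
      have hint1 : IntervalIntegrable (Ffun β δ M) MeasureTheory.volume 0 M :=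
        (Ffun_cont hβ0).intervalIntegrable 0 M
      have hint2 : IntervalIntegrable (Ffun β δ M) MeasureTheory.volume M t :=
        (Ffun_cont hβ0).intervalIntegrable M t
      have hsplit : Fcal β δ M t = Fcal β δ M M + ∫ τ in M..t, Ffun β δ M τ := by
        unfold Fcal
        rw [← intervalIntegral.integral_add_adjacent_intervals hint1 hint2]
      have hnn : 0 ≤ ∫ τ in M..t, Ffun β δ M τ :=
        intervalIntegral.integral_nonneg (by linarith)
          (fun τ _ => Ffun_nonneg hβ0 hδ hM τ)
      have hm := mid_bound (M := M) hβ hδ hM.le le_rfl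
      rw [hmm, hsplit]
      linarith
end
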